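/- Let q, p be positive integers and β₁ > β₂ > ⋯ > β_g positive integers with the gcd chain e₀ = q, e_i = gcd(e_{i-1}, β_i), e_g = 1, arising as a dual Puiseux characteristic. If for every i = 1, …, g one has e_{i-1} ≡ e_i (mod β_i) or e_{i-1} ≡ -e_i (mod β_i), then the characteristic (q,p;β₁,…,β_g) can be reduced to a rank-one datum (1, β_g; ) by a finite sequence of the following moves on characteristics: (q,p;β₁,…) ↦ (q,β₁;β₁,…) [addition]; for p < q: (q,p;β₁,β₂,…,β_g) ↦ (q-p, β₁; β₂,…,β_g) if (q-p) | β₁, else ↦ (q-p, β₁; β₁,…,β_g) [F^{(∞,0)}]; for p > q with p = β₁ and (p-q) | β₁: (q,p;β₁,…,β_g) ↦ (p-q, β₁; β₂,…,β_g), else ↦ (p-q, p; β₁,…,β_g) [F^{(∞,∞)}]. -/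
import Mathlib


/-- A dual Puiseux characteristic `(q, p; β₁, …, β_g)`, recorded as the pole data `q`, `p`
together with the list `βs = [β₁, …, β_g]` of characteristic exponents. -/
structure DChar where
  q : ℕ
  p : ℕ
  βs : List ℕ
deriving DecidableEq

/-- The combinatorial moves on dual Puiseux characteristics induced by additions and by
the local Fourier transforms `F^{(∞,0)}` and `F^{(∞,∞)}` (Proposition `fourierpuiseux`). -/
inductive FourierMove : DChar → DChar → Prop
  /-- addition: `(q,p;β₁,…) ↦ (q,β₁;β₁,…)`. -/
  | addition (q p b : ℕ) (t : List ℕ) :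
      FourierMove ⟨q, p, b :: t⟩ ⟨q, b, b :: t⟩
  /-- `F^{(∞,0)}` for `p < q` with `(q-p) ∣ β₁`: `(q,p;β₁,β₂,…,β_g) ↦ (q-p,β₁;β₂,…,β_g)`. -/
  | finfZero_div (q p b : ℕ) (t : List ℕ) (h : p < q) (hd : (q - p) ∣ b) :
      FourierMove ⟨q, p, b :: t⟩ ⟨q - p, b, t⟩
  /-- `F^{(∞,0)}` for `p < q` with `(q-p) ∤ β₁`: `(q,p;β₁,…,β_g) ↦ (q-p,β₁;β₁,…,β_g)`. -/
  | finfZero_ndiv (q p b : ℕ) (t : List ℕ) (h : p < q) (hd : ¬ (q - p) ∣ b) :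
      FourierMove ⟨q, p, b :: t⟩ ⟨q - p, b, b :: t⟩
  /-- `F^{(∞,∞)}` for `p > q`, `p = β₁`, `(p-q) ∣ β₁`: `(q,p;β₁,β₂,…) ↦ (p-q,β₁;β₂,…)`. -/
  | finfInf_div (q p b : ℕ) (t : List ℕ) (h : q < p) (hb : p = b) (hd : (p - q) ∣ b) :
      FourierMove ⟨q, p, b :: t⟩ ⟨p - q, b, t⟩
  /-- `F^{(∞,∞)}` for `p > q`, otherwise: `(q,p;β₁,…,β_g) ↦ (p-q,p;β₁,…,β_g)`. -/
  | finfInf_ndiv (q p b : ℕ) (t : List ℕ) (h : q < p) (hnd : ¬ (p = b ∧ (p - q) ∣ b)) :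
      FourierMove ⟨q, p, b :: t⟩ ⟨p - q, p, b :: t⟩

/-- `ValidChain q βs` : the gcd chain `e₀ = q`, `e_i = gcd(e_{i-1}, β_i)` satisfies
`e_{i-1} ∤ β_i` at every step and terminates with `e_g = 1`
(so that `(q, p; βs)` is a genuine dual Puiseux characteristic). -/
def ValidChain : ℕ → List ℕ → Prop
  | q, [] => q = 1
  | q, b :: t => ¬ q ∣ b ∧ ValidChain (Nat.gcd q b) t

/-- `CongCond q βs` : the congruence condition `e_{i-1} ≡ ±e_i (mod β_i)` for all `i`,
along the gcd chain `e₀ = q`, `e_i = gcd(e_{i-1}, β_i)`. -/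
def CongCond : ℕ → List ℕ → Prop
  | _, [] => True
  | q, b :: t =>
      ((q : ℤ) ≡ (Nat.gcd q b : ℤ) [ZMOD (b : ℤ)] ∨
        (q : ℤ) ≡ -(Nat.gcd q b : ℤ) [ZMOD (b : ℤ)]) ∧
      CongCond (Nat.gcd q b) t

/-- One block of the reduction: from `(x, b, b :: t)` we can reach `(gcd x b, b, t)`
by Fourier moves, provided `x ≡ ± gcd x b (mod b)`. -/
lemma reduce_block (b : ℕ) (t : List ℕ) (hb : 0 < b) (G : ℕ) (hGb : G ∣ b) (x : ℕ) :
    0 < x → x ≠ b → Nat.gcd x b = G →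
    ((x : ℤ) ≡ (G : ℤ) [ZMOD (b : ℤ)] ∨ (x : ℤ) ≡ -(G : ℤ) [ZMOD (b : ℤ)]) →
    Relation.ReflTransGen FourierMove ⟨x, b, b :: t⟩ ⟨G, b, t⟩ := by
  induction x using Nat.strong_induction_on with
  | _ x ih =>
  intro hx hxb hgcd hc
  have hGx : G ∣ x := hgcd ▸ Nat.gcd_dvd_left x b
  have hGpos : 0 < G := hgcd ▸ Nat.gcd_pos_of_pos_left b hx
  rcases lt_trichotomy x b with hlt | heq | hgt
  · -- x < b
    have hGlt : G < b := by
      rcases lt_or_eq_of_le (Nat.le_of_dvd hb hGb) with h | h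
      · exact h
      · exact absurd (Nat.le_of_dvd hx (h ▸ hGx)) (by omega)
    by_cases hdvd : (b - x) ∣ b
    · -- one divisible Fourier step lands exactly at G
      have hbx_x : (b - x) ∣ x := by
        have h := Nat.dvd_sub hdvd (dvd_refl (b - x))
        rwa [Nat.sub_sub_self hlt.le] at h
      have h1 : b - x = G :=
        Nat.dvd_antisymm (hgcd ▸ Nat.dvd_gcd hbx_x hdvd) (Nat.dvd_sub hGb hGx)
      have mv := FourierMove.finfInf_div x b b t hlt rfl hdvd
      rw [h1] at mv
      exact Relation.ReflTransGen.single mv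
    · -- here necessarily x = G; two steps
      have hxG : x = G := by
        have hxZ : (0 : ℤ) < x := by exact_mod_cast hx
        have hxbZ : (x : ℤ) < b := by exact_mod_cast hlt
        have hGZ : (0 : ℤ) < G := by exact_mod_cast hGpos
        have hGbZ : (G : ℤ) < b := by exact_mod_cast hGlt
        rcases hc with h | h
        · have hd : (b : ℤ) ∣ (G : ℤ) - x := Int.ModEq.dvd h
          have := Int.eq_zero_of_abs_lt_dvd hd (abs_lt.mpr ⟨by omega, by omega⟩)
          omega
        · have hd : (b : ℤ) ∣ -(G : ℤ) - x := Int.ModEq.dvd h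
          have hd2 : (b : ℤ) ∣ (x : ℤ) + G - b := by
            have : (x : ℤ) + G - b = -(-(G : ℤ) - x) - b := by ring
            rw [this]
            exact dvd_sub (dvd_neg.mpr hd) dvd_rfl
          have := Int.eq_zero_of_abs_lt_dvd hd2 (abs_lt.mpr ⟨by omega, by omega⟩)
          -- x + G = b, so x = b - G; but then (b - x) = G ∣ b, contradiction
          exfalso
          apply hdvd
          have : b - x = G := by omega
          rw [this]; exact hGb
      have mv1 := FourierMove.finfInf_ndiv x b b t hlt (by
        rintro ⟨-, hdd⟩; exact hdvd hdd)
      have mv2 := FourierMove.finfInf_div (b - x) b b t (by omega) rfl (by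
        have : b - (b - x) = G := by omega
        rw [this]; exact hGb)
      have h2 : b - (b - x) = G := by omega
      rw [h2] at mv2
      exact Relation.ReflTransGen.head mv1 (Relation.ReflTransGen.single mv2)
  · exact absurd heq hxb
  · -- x > b : one subtractive Euclid step
    by_cases hdvd : (x - b) ∣ b
    · have hxb_x : (x - b) ∣ x := by
        have h := Nat.dvd_add (dvd_refl (x - b)) hdvd
        rwa [Nat.sub_add_cancel hgt.le] at h
      have h1 : x - b = G :=
        Nat.dvd_antisymm (hgcd ▸ Nat.dvd_gcd hxb_x hdvd) (Nat.dvd_sub hGx hGb)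
      have mv := FourierMove.finfZero_div x b b t hgt hdvd
      rw [h1] at mv
      exact Relation.ReflTransGen.single mv
    · have mv := FourierMove.finfZero_ndiv x b b t hgt hdvd
      have hgcd' : Nat.gcd (x - b) b = G := by
        rw [Nat.gcd_sub_self_left (le_of_lt hgt)]; exact hgcd
      have hcast : ((x - b : ℕ) : ℤ) = (x : ℤ) - b := by
        push_cast [Nat.cast_sub (le_of_lt hgt)]; ring
      have hmod : ((x - b : ℕ) : ℤ) ≡ (x : ℤ) [ZMOD (b : ℤ)] := by
        rw [hcast]
        exact Int.modEq_iff_dvd.mpr ⟨1, by ring⟩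
      have hc' : (((x - b : ℕ) : ℤ) ≡ (G : ℤ) [ZMOD (b : ℤ)] ∨
          ((x - b : ℕ) : ℤ) ≡ -(G : ℤ) [ZMOD (b : ℤ)]) := by
        rcases hc with h | h
        · exact Or.inl (hmod.trans h)
        · exact Or.inr (hmod.trans h)
      have hne : x - b ≠ b := by
        intro h; rw [h] at hdvd; exact hdvd dvd_rfl
      exact Relation.ReflTransGen.head mv
        (ih (x - b) (by omega) (by omega) hne hgcd' hc')

/-- 'if' direction of the main theorem.  If a dual Puiseux
characteristic `(q, p; β₁, …, β_g)` (with `q, p > 0`, strictly decreasing positive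
exponents, valid gcd chain ending at `1`) satisfies `e_{i-1} ≡ ±e_i (mod β_i)` for all
`i`, then it can be reduced to the rank-one characteristic `(1, β_g; )` by a finite
sequence of additions and local Fourier transform moves. -/
theorem reduction_of_congruences (q p : ℕ) (βs : List ℕ)
    (hq : 0 < q) (hp : 0 < p)
    (hpos : ∀ b ∈ βs, 0 < b)
    (hdec : βs.Chain' (· > ·))
    (hvalid : ValidChain q βs)
    (hcong : CongCond q βs) :
    Relation.ReflTransGen FourierMove ⟨q, p, βs⟩ ⟨1, βs.getLastD p, []⟩ := by
  induction βs generalizing q p with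
  | nil =>
    have : q = 1 := hvalid
    subst this
    exact Relation.ReflTransGen.refl
  | cons b t ihl =>
    obtain ⟨hnd, hv'⟩ := hvalid
    obtain ⟨hc, hcong'⟩ := hcong
    have hbpos : 0 < b := hpos b (by simp)
    have hqb : q ≠ b := by rintro rfl; exact hnd dvd_rfl
    have step1 : FourierMove ⟨q, p, b :: t⟩ ⟨q, b, b :: t⟩ :=
      FourierMove.addition q p b t
    have step2 := reduce_block b t hbpos (Nat.gcd q b) (Nat.gcd_dvd_right q b) q
      hq hqb rfl hc
    have step3 := ihl (Nat.gcd q b) b (Nat.gcd_pos_of_pos_left b hq) hbpos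
      (fun x hx => hpos x (by simp [hx])) hdec.tail hv' hcong'
    rw [List.getLastD_cons]
    exact Relation.ReflTransGen.head step1 (step2.trans step3)
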